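/- For the depolarizing channel D_p on d×d matrices with p ∈ [0,1], the Doeblin minorization constant equals p: the maximum c ∈ [0,1] for which there exists a density matrix σ with D_p − c·R_σ completely positive is exactly p (achieved by σ = I/d). -/

import Mathlib

open Matrix
open scoped ComplexOrder

noncomputable def trNorm {n : Type*} [Fintype n] [DecidableEq n] (A : Matrix n n ℂ) : ℝ :=
  ∑ i, Real.sqrt ((Matrix.isHermitian_conjTranspose_mul_self A).eigenvalues i)

noncomputable def choi {m n : Type*} [Fintype m] [DecidableEq m] [Fintype n]
    (Φ : Matrix m m ℂ →ₗ[ℂ] Matrix n n ℂ) : Matrix (m × n) (m × n) ℂ :=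
  Matrix.of fun p q => Φ (Matrix.single p.1 q.1 1) p.2 q.2

def IsCP {m n : Type*} [Fintype m] [DecidableEq m] [Fintype n]
    (Φ : Matrix m m ℂ →ₗ[ℂ] Matrix n n ℂ) : Prop := (choi Φ).PosSemidef

def IsTP {m n : Type*} [Fintype m] [Fintype n]
    (Φ : Matrix m m ℂ →ₗ[ℂ] Matrix n n ℂ) : Prop := ∀ A, (Φ A).trace = A.trace

def IsDensity {n : Type*} [Fintype n] (ρ : Matrix n n ℂ) : Prop :=
  ρ.PosSemidef ∧ ρ.trace = 1

noncomputable def replacer {m n : Type*} [Fintype m] (σ : Matrix n n ℂ) :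
    Matrix m m ℂ →ₗ[ℂ] Matrix n n ℂ where
  toFun A := A.trace • σ
  map_add' A B := by simp [Matrix.trace_add, add_smul]
  map_smul' c A := by simp [Matrix.trace_smul, smul_smul]

private lemma choi_smul_id_psd {d : ℕ} {t : ℝ} (ht : 0 ≤ t) :
    (choi ((t:ℂ) • (LinearMap.id : Matrix (Fin d) (Fin d) ℂ →ₗ[ℂ] Matrix (Fin d) (Fin d) ℂ))).PosSemidef := by
  have key : choi ((t:ℂ) • (LinearMap.id : Matrix (Fin d) (Fin d) ℂ →ₗ[ℂ] Matrix (Fin d) (Fin d) ℂ))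
      = (Matrix.of fun (_ : Unit) (q : Fin d × Fin d) =>
          ((Real.sqrt t : ℂ) * (if q.1 = q.2 then 1 else 0)))ᴴ
        * (Matrix.of fun (_ : Unit) (q : Fin d × Fin d) =>
          ((Real.sqrt t : ℂ) * (if q.1 = q.2 then 1 else 0))) := by
    ext ⟨a, b⟩ ⟨c, e⟩
    simp only [choi, Matrix.of_apply, LinearMap.smul_apply, LinearMap.id_apply,
      Matrix.smul_apply, smul_eq_mul, Matrix.mul_apply, Matrix.conjTranspose_apply,
      Finset.univ_unique, Finset.sum_singleton, Matrix.single, star_mul']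
    have hsq : (Real.sqrt t : ℂ) * (Real.sqrt t : ℂ) = (t : ℂ) := by
      rw [← Complex.ofReal_mul, Real.mul_self_sqrt ht]
    split_ifs with h1 h2 h3 h2 <;> simp_all [Complex.conj_ofReal]
  rw [key]
  exact Matrix.posSemidef_conjTranspose_mul_self _

theorem stmt11 {d : ℕ} (hd : 1 < d) (p : ℝ) (hp : p ∈ Set.Icc (0:ℝ) 1) :
    IsGreatest {c : ℝ | c ∈ Set.Icc (0:ℝ) 1 ∧
        ∃ σ : Matrix (Fin d) (Fin d) ℂ, IsDensity σ ∧
          IsCP (((1 - (p : ℂ)) • (LinearMap.id : Matrix (Fin d) (Fin d) ℂ →ₗ[ℂ] Matrix (Fin d) (Fin d) ℂ)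
              + (p : ℂ) • replacer ((d : ℂ)⁻¹ • (1 : Matrix (Fin d) (Fin d) ℂ)))
            - (c : ℂ) • replacer σ)} p := by
  obtain ⟨hp0, hp1⟩ := hp
  have hd0 : (d : ℂ) ≠ 0 := by
    simp only [ne_eq, Nat.cast_eq_zero]; omega
  constructor
  · -- membership
    refine ⟨⟨hp0, hp1⟩, (d : ℂ)⁻¹ • 1, ⟨?_, ?_⟩, ?_⟩
    · -- PSD of (d:ℂ)⁻¹ • 1
      have : ((d : ℂ)⁻¹ • (1 : Matrix (Fin d) (Fin d) ℂ))
          = Matrix.diagonal (fun _ => (d : ℂ)⁻¹) := by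
        ext i j
        by_cases h : i = j <;> simp [Matrix.one_apply, Matrix.diagonal, h]
      rw [this]
      refine Matrix.PosSemidef.diagonal fun i => ?_
      simp only [Pi.zero_apply]
      have : ((d : ℂ))⁻¹ = ((((d : ℝ))⁻¹ : ℝ) : ℂ) := by
        rw [← Complex.ofReal_natCast, ← Complex.ofReal_inv]
      rw [this, Complex.zero_le_real]
      positivity
    · -- trace
      rw [Matrix.trace_smul, Matrix.trace_one]
      simp only [Fintype.card_fin, smul_eq_mul]
      exact inv_mul_cancel₀ hd0
    · -- CP
      rw [add_sub_cancel_right]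
      have h1p : (1 - (p:ℂ)) = (((1 - p : ℝ)) : ℂ) := by push_cast; ring
      rw [h1p]
      exact choi_smul_id_psd (by linarith)
  · -- upper bound
    rintro c ⟨⟨hc0, hc1⟩, σ, ⟨hσpsd, hσtr⟩, hCP⟩
    set Φ := ((1 - (p : ℂ)) • (LinearMap.id : Matrix (Fin d) (Fin d) ℂ →ₗ[ℂ] Matrix (Fin d) (Fin d) ℂ)
              + (p : ℂ) • replacer ((d : ℂ)⁻¹ • (1 : Matrix (Fin d) (Fin d) ℂ)))
            - (c : ℂ) • replacer σ with hΦ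
    set ζ : ℂ := Complex.exp (2 * Real.pi * Complex.I / d) with hζdef
    have hprim : IsPrimitiveRoot ζ d := Complex.isPrimitiveRoot_exp d (by omega)
    have hsum : ∑ i : Fin d, ζ ^ (i : ℕ) = 0 := by
      rw [Fin.sum_univ_eq_sum_range (fun i => ζ ^ i) d]
      exact hprim.geom_sum_eq_zero hd
    have hζ1 : (starRingEnd ℂ) ζ * ζ = 1 := by
      rw [hζdef, ← Complex.exp_conj, ← Complex.exp_add]
      have : (starRingEnd ℂ) (2 * Real.pi * Complex.I / d) = -(2 * Real.pi * Complex.I / d) := by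
        simp [map_div₀, Complex.conj_I, Complex.conj_ofReal, map_ofNat]
        ring
      rw [this, neg_add_cancel, Complex.exp_zero]
    have hζpow : ∀ a : ℕ, (starRingEnd ℂ) (ζ ^ a) * ζ ^ a = 1 := by
      intro a
      rw [map_pow, ← mul_pow, hζ1, one_pow]
    -- the test vector
    set v : Fin d × Fin d → ℂ := fun q => if q.1 = q.2 then ζ ^ (q.1 : ℕ) else 0 with hv
    -- diagonal entries of the Choi matrix
    have hM : ∀ a q : Fin d, choi Φ (a, a) (q, q)
        = (1 - (p:ℂ)) + (if a = q then ((p:ℂ)/d - (c:ℂ) * σ a a) else 0) := by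
      intro a q
      by_cases haq : a = q
      · subst haq
        simp only [choi, Matrix.of_apply, hΦ, LinearMap.sub_apply, LinearMap.add_apply,
          LinearMap.smul_apply, LinearMap.id_apply, replacer, LinearMap.coe_mk, AddHom.coe_mk,
          Matrix.trace_single_eq_same, one_smul, Matrix.sub_apply, Matrix.add_apply,
          Matrix.smul_apply, Matrix.one_apply_eq, smul_eq_mul,
          Matrix.single_apply_same, eq_self_iff_true, if_true]
        ring
      · simp only [choi, Matrix.of_apply, hΦ, LinearMap.sub_apply, LinearMap.add_apply,
          LinearMap.smul_apply, LinearMap.id_apply, replacer, LinearMap.coe_mk, AddHom.coe_mk,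
          Matrix.trace_single_eq_of_ne (c := (1:ℂ)) (h := haq), zero_smul,
          Matrix.sub_apply, Matrix.add_apply, Matrix.smul_apply, smul_eq_mul, Matrix.zero_apply,
          if_neg haq, mul_zero, add_zero, sub_zero]
        rw [Matrix.single, Matrix.of_apply, if_pos ⟨rfl, rfl⟩]
        ring
    -- mulVec collapse
    have hinner : ∀ pq : Fin d × Fin d,
        (choi Φ *ᵥ v) pq = ∑ q : Fin d, choi Φ pq (q, q) * ζ ^ (q : ℕ) := by
      intro pq
      simp only [Matrix.mulVec, dotProduct]
      rw [Fintype.sum_prod_type]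
      refine Finset.sum_congr rfl fun q _ => ?_
      simp [hv, mul_ite, Finset.sum_ite_eq]
    have hmain : star v ⬝ᵥ (choi Φ *ᵥ v) = (p:ℂ) - (c:ℂ) := by
      have houter : star v ⬝ᵥ (choi Φ *ᵥ v)
          = ∑ a : Fin d, (starRingEnd ℂ) (ζ ^ (a:ℕ)) * (choi Φ *ᵥ v) (a, a) := by
        simp only [dotProduct, Pi.star_apply, RCLike.star_def]
        rw [Fintype.sum_prod_type]
        refine Finset.sum_congr rfl fun a _ => ?_
        simp [hv, apply_ite (starRingEnd ℂ), ite_mul, Finset.sum_ite_eq]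
      rw [houter]
      have hstep : ∀ a : Fin d,
          (starRingEnd ℂ) (ζ ^ (a:ℕ)) * (choi Φ *ᵥ v) (a, a)
            = (1 - (p:ℂ)) * ((starRingEnd ℂ) (ζ ^ (a:ℕ)) * ∑ q : Fin d, ζ ^ (q:ℕ))
              + ((p:ℂ)/d - (c:ℂ) * σ a a) := by
        intro a
        rw [hinner, Finset.mul_sum]
        have : ∀ q : Fin d, (starRingEnd ℂ) (ζ ^ (a:ℕ)) * (choi Φ (a, a) (q, q) * ζ ^ (q:ℕ))
            = (1 - (p:ℂ)) * ((starRingEnd ℂ) (ζ ^ (a:ℕ)) * ζ ^ (q:ℕ))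
              + (if a = q then ((starRingEnd ℂ) (ζ ^ (a:ℕ)) * ζ ^ (q:ℕ)) * ((p:ℂ)/d - (c:ℂ) * σ a a) else 0) := by
          intro q
          rw [hM]
          split_ifs <;> ring
        rw [Finset.sum_congr rfl fun q _ => this q, Finset.sum_add_distrib]
        congr 1
        · rw [← Finset.mul_sum, ← Finset.mul_sum]
        · rw [Finset.sum_ite_eq]
          simp only [Finset.mem_univ, if_true, map_pow]
          rw [← mul_pow, hζ1, one_pow, one_mul]
      rw [Finset.sum_congr rfl fun a _ => hstep a, Finset.sum_add_distrib]
      rw [hsum]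
      simp only [mul_zero, Finset.sum_const_zero, zero_add]
      rw [Finset.sum_sub_distrib, Finset.sum_const, Finset.card_univ, Fintype.card_fin,
        ← Finset.mul_sum]
      have : ∑ a : Fin d, σ a a = 1 := by
        rw [← hσtr]; rfl
      rw [this, nsmul_eq_mul, mul_div_cancel₀ _ hd0, mul_one]
    have hq := hCP.dotProduct_mulVec_nonneg v
    rw [hmain] at hq
    have : ((p:ℂ) - (c:ℂ)) = (((p - c : ℝ)) : ℂ) := by push_cast; ring
    rw [this, Complex.zero_le_real] at hq
    linarith
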